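/- Let R satisfy (H1), a ∈ ℝ₊ᵈ, and fix n ≥ 1. For the solution of SP({a+Σu_n}, R): Δy_n^{(a)} ≫ 0 (all components strictly positive) if and only if −R⁻¹u_n ≫ R⁻¹z_{n−1}^{(a)}, if and only if −R⁻¹a + Σ_{ℓ=1}^n(−R⁻¹u_ℓ) ≫ y_{n−1}^{(a)}. -/
import Mathlib


open Matrix Finset MeasureTheory ProbabilityTheory

noncomputable section

/-- A pair `(ξ, ζ)` solves the linear complementarity problem `LCP(η, M)`. -/
def IsLCPSol {d : ℕ} (M : Matrix (Fin d) (Fin d) ℝ) (η ξ ζ : Fin d → ℝ) : Prop :=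
  ζ = η + M *ᵥ ξ ∧ (∀ i, 0 ≤ ξ i) ∧ (∀ i, 0 ≤ ζ i) ∧ ξ ⬝ᵥ ζ = 0

/-- `(y, z)` solves the Skorokhod problem `SP({a + Σ u_n}, M)` in the orthant. -/
def IsSPSol {d : ℕ} (M : Matrix (Fin d) (Fin d) ℝ) (a : Fin d → ℝ)
    (u y z : ℕ → Fin d → ℝ) : Prop :=
  y 0 = 0 ∧ z 0 = a ∧
  ∀ n, 1 ≤ n →
    z n = z (n - 1) + u n + M *ᵥ (y n - y (n - 1)) ∧
    (∀ i, 0 ≤ z n i) ∧ (∀ i, 0 ≤ y n i - y (n - 1) i) ∧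
    z n ⬝ᵥ (y n - y (n - 1)) = 0

section Aux

attribute [local instance] Matrix.linftyOpNormedRing Matrix.linftyOpNormedAlgebra
  Matrix.linftyOpNormedSpace

variable {d : ℕ}

lemma aux_pow_entries_nonneg {Q : Matrix (Fin d) (Fin d) ℝ} (hQ : ∀ i j, 0 ≤ Q i j) (k : ℕ) :
    ∀ i j, 0 ≤ (Q ^ k) i j := by
  induction k with
  | zero =>
      intro i j
      rw [pow_zero]
      by_cases h : i = j
      · simp [Matrix.one_apply, h]
      · simp [Matrix.one_apply, h]
  | succ k ih =>
      intro i j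
      rw [pow_succ, Matrix.mul_apply]
      exact Finset.sum_nonneg fun l _ => mul_nonneg (ih i l) (hQ l j)

lemma aux_mul_entries_nonneg {A B : Matrix (Fin d) (Fin d) ℝ}
    (hA : ∀ i j, 0 ≤ A i j) (hB : ∀ i j, 0 ≤ B i j) : ∀ i j, 0 ≤ (A * B) i j := by
  intro i j
  rw [Matrix.mul_apply]
  exact Finset.sum_nonneg fun l _ => mul_nonneg (hA i l) (hB l j)

/-- Entry evaluation as a continuous linear map. -/
def entryCLM (i j : Fin d) : Matrix (Fin d) (Fin d) ℝ →L[ℝ] ℝ :=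
  LinearMap.toContinuousLinearMap
    { toFun := fun A => A i j
      map_add' := fun _ _ => rfl
      map_smul' := fun _ _ => rfl }

lemma aux_neumann_nonneg {B : Matrix (Fin d) (Fin d) ℝ} (hB : ∀ i j, 0 ≤ B i j)
    (hn : ‖B‖ < 1) : ∀ i j, 0 ≤ (1 - B)⁻¹ i j := by
  intro i j
  rw [Matrix.nonsing_inv_eq_ringInverse]
  have hs : HasSum (fun k : ℕ => B ^ k) (Ring.inverse (1 - B)) :=
    hasSum_geom_series_inverse B hn
  have hs' : HasSum (fun k : ℕ => (B ^ k) i j) ((Ring.inverse (1 - B)) i j) :=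
    (entryCLM i j).hasSum hs
  exact hasSum_le (fun k => aux_pow_entries_nonneg hB k i j) hasSum_zero hs'

lemma aux_inv_entries_nonneg {Q : Matrix (Fin d) (Fin d) ℝ} (hQ : ∀ i j, 0 ≤ Q i j)
    (hinv : ∀ t : ℝ, t ∈ Set.Icc (0:ℝ) 1 → IsUnit (1 - t • Q)) :
    ∀ i j, 0 ≤ (1 - Q)⁻¹ i j := by
  -- continuity and boundedness of the inverse along the segment
  have hg : ContinuousOn (fun t : ℝ => Ring.inverse (1 - t • Q)) (Set.Icc (0:ℝ) 1) := by
    intro t ht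
    have h1 : ContinuousAt (fun t : ℝ => 1 - t • Q) t := by fun_prop
    have h2 : ContinuousAt Ring.inverse (1 - t • Q) := by
      have := NormedRing.inverse_continuousAt (hinv t ht).unit
      rwa [IsUnit.unit_spec] at this
    have h3 : ContinuousAt (fun s : ℝ => Ring.inverse (1 - s • Q)) t := ContinuousAt.comp (f := fun s : ℝ => 1 - s • Q) (x := t) h2 h1
    exact h3.continuousWithinAt
  obtain ⟨C, hC⟩ := isCompact_Icc.exists_bound_of_continuousOn hg
  have hC0 : 0 ≤ C := le_trans (norm_nonneg _) (hC 0 ⟨le_refl _, zero_le_one⟩)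
  obtain ⟨N, hN⟩ := exists_nat_gt (C * ‖Q‖ + 1)
  have hNpos : (0:ℝ) < N := lt_of_le_of_lt (by positivity) hN
  -- the inductive claim
  have key : ∀ k : ℕ, k ≤ N → ∀ i j, 0 ≤ ((1 - ((k : ℝ)/N) • Q)⁻¹) i j := by
    intro k
    induction k with
    | zero =>
        intro _ i j
        norm_num
        by_cases h : i = j
        · simp [Matrix.one_apply, h]
        · simp [Matrix.one_apply, h]
    | succ k ih =>
        intro hk i j
        have hk' : k ≤ N := Nat.le_of_succ_le hk
        have ihk := ih hk'
        have htk : ((k : ℝ)/N) ∈ Set.Icc (0:ℝ) 1 := by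
          constructor
          · positivity
          · rw [div_le_one hNpos]; exact_mod_cast hk'
        have htk1 : (((k+1 : ℕ) : ℝ)/N) ∈ Set.Icc (0:ℝ) 1 := by
          constructor
          · positivity
          · rw [div_le_one hNpos]; exact_mod_cast hk
        have hUk : IsUnit (1 - ((k : ℝ)/N) • Q) := hinv _ htk
        have hUdet : IsUnit (1 - ((k : ℝ)/N) • Q).det :=
          (Matrix.isUnit_iff_isUnit_det _).mp hUk
        set A := 1 - ((k : ℝ)/N) • Q with hA
        set B := (N : ℝ)⁻¹ • (A⁻¹ * Q) with hB
        -- entries of B are nonnegative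
        have hBnn : ∀ i j, 0 ≤ B i j := by
          intro i j
          have : 0 ≤ (A⁻¹ * Q) i j := aux_mul_entries_nonneg ihk hQ i j
          have hNi : (0:ℝ) ≤ (N : ℝ)⁻¹ := by positivity
          simpa [hB, Matrix.smul_apply, smul_eq_mul] using mul_nonneg hNi this
        -- norm bound on B
        have hAinvnorm : ‖A⁻¹‖ ≤ C := by
          have := hC _ htk
          rwa [← Matrix.nonsing_inv_eq_ringInverse] at this
        have hBnorm : ‖B‖ < 1 := by
          have h1 : ‖A⁻¹ * Q‖ ≤ C * ‖Q‖ :=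
            le_trans (norm_mul_le _ _) (by
              have := norm_nonneg Q
              exact mul_le_mul_of_nonneg_right hAinvnorm this)
          have h2 : ‖B‖ ≤ (N : ℝ)⁻¹ * (C * ‖Q‖) := by
            rw [hB, norm_smul]
            have : |(N : ℝ)⁻¹| = (N : ℝ)⁻¹ := abs_of_nonneg (by positivity)
            rw [Real.norm_eq_abs, this]
            exact mul_le_mul_of_nonneg_left h1 (by positivity)
          calc ‖B‖ ≤ (N : ℝ)⁻¹ * (C * ‖Q‖) := h2
            _ < (N : ℝ)⁻¹ * N := by
              apply mul_lt_mul_of_pos_left _ (by positivity)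
              linarith [hN, norm_nonneg Q, mul_nonneg hC0 (norm_nonneg Q)]
            _ = 1 := inv_mul_cancel₀ (ne_of_gt hNpos)
        -- factorization 1 - ((k+1)/N) • Q = A * (1 - B)
        have hfac : 1 - (((k+1:ℕ) : ℝ)/N) • Q = A * (1 - B) := by
          have hcancel : A * (A⁻¹ * Q) = Q := Matrix.mul_nonsing_inv_cancel_left _ _ hUdet
          have : A * (1 - B) = A - (N:ℝ)⁻¹ • Q := by
            rw [hB, Matrix.mul_sub, Matrix.mul_one, Matrix.mul_smul, hcancel]
          rw [this, hA]
          rw [sub_sub, ← add_smul]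
          congr 1
          push_cast
          field_simp
        rw [hfac, Matrix.mul_inv_rev]
        exact aux_mul_entries_nonneg (aux_neumann_nonneg hBnn hBnorm) ihk i j
  have := key N (le_refl N) 
  have hNN : ((N : ℝ)/N) = 1 := div_self (ne_of_gt hNpos)
  rw [hNN, one_smul] at this
  exact this

end Aux

/-- From the spectral radius hypothesis: `1 - t • P` is invertible for `t ∈ [0,1]`. -/
lemma aux_isUnit_one_sub_smul {d : ℕ} {P : Matrix (Fin d) (Fin d) ℝ}
    (hspec : spectralRadius ℝ P < 1) {t : ℝ} (ht : t ∈ Set.Icc (0:ℝ) 1) :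
    IsUnit (1 - t • P) := by
  rcases eq_or_lt_of_le ht.1 with h0 | h0
  · rw [← h0, zero_smul, sub_zero]; exact isUnit_one
  · have hmem : (t⁻¹ : ℝ) ∉ spectrum ℝ P := by
      intro hmem
      have hle : (‖(t⁻¹ : ℝ)‖₊ : ENNReal) ≤ spectralRadius ℝ P :=
        le_iSup₂ (f := fun k (_ : k ∈ spectrum ℝ P) => (‖k‖₊ : ENNReal)) (t⁻¹) hmem
      have h1le : (1 : ℝ) ≤ ‖(t⁻¹ : ℝ)‖₊ := by
        rw [Real.nnnorm_of_nonneg (by positivity)]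
        have h := mul_inv_cancel₀ (ne_of_gt h0)
        have h2 : (0:ℝ) < t⁻¹ := inv_pos.mpr h0
        push_cast
        nlinarith [ht.2]
      have : (1 : ENNReal) ≤ spectralRadius ℝ P := by
        refine le_trans ?_ hle
        exact_mod_cast (by exact_mod_cast h1le : (1 : NNReal) ≤ ‖(t⁻¹ : ℝ)‖₊)
      exact absurd (lt_of_le_of_lt this hspec) (lt_irrefl _)
    have hU : IsUnit (algebraMap ℝ (Matrix (Fin d) (Fin d) ℝ) t⁻¹ - P) :=
      spectrum.notMem_iff.mp hmem
    have hfac : 1 - t • P = t • (algebraMap ℝ (Matrix (Fin d) (Fin d) ℝ) t⁻¹ - P) := by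
      rw [Algebra.algebraMap_eq_smul_one, smul_sub, smul_smul,
        mul_inv_cancel₀ (ne_of_gt h0), one_smul]
    rw [hfac]
    have hsmul : t • (algebraMap ℝ (Matrix (Fin d) (Fin d) ℝ) t⁻¹ - P) =
        (t • (1 : Matrix (Fin d) (Fin d) ℝ)) * (algebraMap ℝ (Matrix (Fin d) (Fin d) ℝ) t⁻¹ - P) := by
      rw [Matrix.smul_mul, Matrix.one_mul]
    rw [hsmul]
    refine (IsUnit.mul ?_ hU)
    rw [Matrix.isUnit_iff_isUnit_det, Matrix.det_smul, Matrix.det_one, mul_one]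
    exact (isUnit_iff_ne_zero.mpr (ne_of_gt h0)).pow _
  
theorem stmt_7 {d : ℕ} (P : Matrix (Fin d) (Fin d) ℝ)
    (hdiag : ∀ i, P i i = 0) (hnonneg : ∀ i j, 0 ≤ P i j)
    (hspec : spectralRadius ℝ P < 1)
    (a : Fin d → ℝ) (ha : ∀ i, 0 ≤ a i) (u y z : ℕ → Fin d → ℝ)
    (hSP : IsSPSol (1 - Pᵀ) a u y z) (n : ℕ) (hn : 1 ≤ n) :
    ((∀ i, 0 < y n i - y (n - 1) i) ↔
      ∀ i, ((1 - Pᵀ)⁻¹ *ᵥ z (n - 1)) i < -(((1 - Pᵀ)⁻¹ *ᵥ u n) i)) ∧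
    ((∀ i, 0 < y n i - y (n - 1) i) ↔
      ∀ i, y (n - 1) i <
        -(((1 - Pᵀ)⁻¹ *ᵥ a) i) + ∑ ℓ ∈ Finset.Icc 1 n, -(((1 - Pᵀ)⁻¹ *ᵥ u ℓ) i)) := by
  have hUt : ∀ t : ℝ, t ∈ Set.Icc (0:ℝ) 1 → IsUnit (1 - t • Pᵀ) := by
    intro t ht
    have h := aux_isUnit_one_sub_smul hspec ht
    rw [Matrix.isUnit_iff_isUnit_det] at h ⊢
    have he : (1 - t • Pᵀ) = (1 - t • P)ᵀ := by
      rw [Matrix.transpose_sub, Matrix.transpose_smul, Matrix.transpose_one]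
    rw [he, Matrix.det_transpose]
    exact h
  set M : Matrix (Fin d) (Fin d) ℝ := 1 - Pᵀ with hM
  have hU : IsUnit M := by
    have := hUt 1 ⟨zero_le_one, le_refl 1⟩
    rwa [one_smul] at this
  have hUdet : IsUnit M.det := (Matrix.isUnit_iff_isUnit_det M).mp hU
  have hMinv : ∀ i j, 0 ≤ M⁻¹ i j :=
    aux_inv_entries_nonneg (fun i j => hnonneg j i) hUt
  have hcancel : ∀ x : Fin d → ℝ, M⁻¹ *ᵥ (M *ᵥ x) = x := by
    intro x
    rw [Matrix.mulVec_mulVec, Matrix.nonsing_inv_mul M hUdet, Matrix.one_mulVec]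
  obtain ⟨hy0, hz0, hstep⟩ := hSP
  obtain ⟨heq, hz, hwnn, hdot⟩ := hstep n hn
  set w : Fin d → ℝ := y n - y (n - 1) with hwdef
  -- telescoping identity
  have htel : ∀ m : ℕ, z m = a + (∑ ℓ ∈ Finset.Icc 1 m, u ℓ) + M *ᵥ y m := by
    intro m
    induction m with
    | zero => simp [hz0, hy0, Matrix.mulVec_zero]
    | succ m ih =>
        obtain ⟨heq', _, _, _⟩ := hstep (m+1) (Nat.succ_le_succ (Nat.zero_le m))
        rw [Nat.add_sub_cancel] at heq'
        rw [heq', ih, Finset.sum_Icc_succ_top (Nat.le_add_left 1 m),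
          Matrix.mulVec_sub]
        abel
  -- first equivalence
  have hfirst : (∀ i, 0 < y n i - y (n - 1) i) ↔
      ∀ i, (M⁻¹ *ᵥ z (n - 1)) i < -((M⁻¹ *ᵥ u n) i) := by
    constructor
    · intro hpos
      have hpos' : ∀ i, 0 < w i := by
        intro i; rw [hwdef]; simpa using hpos i
      have hzn : z n = 0 := by
        funext i
        have hsum : ∑ j, z n j * w j = 0 := hdot
        have hterm : ∀ j ∈ Finset.univ, (0:ℝ) ≤ z n j * w j :=
          fun j _ => mul_nonneg (hz j) (hwnn j)
        have h0 := (Finset.sum_eq_zero_iff_of_nonneg hterm).mp hsum i (Finset.mem_univ i)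
        simpa using (mul_eq_zero.mp h0).resolve_right (ne_of_gt (hpos' i))
      have h1 : M *ᵥ w = -(z (n-1)) - u n := by
        funext j
        have hj := congrFun heq j
        rw [hzn] at hj
        simp only [Pi.add_apply, Pi.zero_apply, Pi.sub_apply, Pi.neg_apply] at hj ⊢
        linarith
      have hww : w = -(M⁻¹ *ᵥ z (n-1)) - M⁻¹ *ᵥ u n := by
        calc w = M⁻¹ *ᵥ (M *ᵥ w) := (hcancel w).symm
          _ = _ := by rw [h1, Matrix.mulVec_sub, Matrix.mulVec_neg]
      intro i
      have h4 := congrFun hww i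
      have h5 := hpos' i
      simp only [Pi.sub_apply, Pi.neg_apply] at h4
      linarith
    · intro h i
      have h1 : M *ᵥ w = z n - z (n-1) - u n := by
        funext j
        have hj := congrFun heq j
        simp only [Pi.add_apply, Pi.sub_apply] at hj ⊢
        linarith
      have hww : w = M⁻¹ *ᵥ z n - M⁻¹ *ᵥ z (n-1) - M⁻¹ *ᵥ u n := by
        calc w = M⁻¹ *ᵥ (M *ᵥ w) := (hcancel w).symm
          _ = _ := by rw [h1, Matrix.mulVec_sub, Matrix.mulVec_sub]
      have h2 : 0 ≤ (M⁻¹ *ᵥ z n) i := by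
        show 0 ≤ ∑ j, M⁻¹ i j * z n j
        exact Finset.sum_nonneg fun j _ => mul_nonneg (hMinv i j) (hz j)
      have h3 := h i
      have h4 := congrFun hww i
      have h5 : w i = y n i - y (n - 1) i := by rw [hwdef]; simp
      simp only [Pi.sub_apply] at h4
      linarith
  have hn' : n - 1 + 1 = n := Nat.succ_pred_eq_of_pos hn
  have hsecond : ∀ i, ((M⁻¹ *ᵥ z (n - 1)) i < -((M⁻¹ *ᵥ u n) i) ↔
      y (n - 1) i < -((M⁻¹ *ᵥ a) i) + ∑ ℓ ∈ Finset.Icc 1 n, -((M⁻¹ *ᵥ u ℓ) i)) := by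
    intro i
    have hsumv : M⁻¹ *ᵥ (∑ ℓ ∈ Finset.Icc 1 (n-1), u ℓ)
        = ∑ ℓ ∈ Finset.Icc 1 (n-1), M⁻¹ *ᵥ u ℓ := by
      simp only [← Matrix.mulVecLin_apply]
      exact map_sum (Matrix.mulVecLin M⁻¹) _ _
    have hz1 : (M⁻¹ *ᵥ z (n-1)) i =
        (M⁻¹ *ᵥ a) i + (∑ ℓ ∈ Finset.Icc 1 (n-1), (M⁻¹ *ᵥ u ℓ) i) + y (n-1) i := by
      rw [htel (n-1), Matrix.mulVec_add, Matrix.mulVec_add, hcancel, hsumv]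
      simp [Finset.sum_apply]
    have hsplit : ∑ ℓ ∈ Finset.Icc 1 n, -((M⁻¹ *ᵥ u ℓ) i)
        = (∑ ℓ ∈ Finset.Icc 1 (n-1), -((M⁻¹ *ᵥ u ℓ) i)) + -((M⁻¹ *ᵥ u n) i) := by
      conv_lhs => rw [← hn']
      rw [Finset.sum_Icc_succ_top (Nat.le_add_left 1 (n-1)), hn']
    have hnegsum : ∑ ℓ ∈ Finset.Icc 1 (n-1), -((M⁻¹ *ᵥ u ℓ) i)
        = -∑ ℓ ∈ Finset.Icc 1 (n-1), (M⁻¹ *ᵥ u ℓ) i := by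
      simp
    rw [hsplit, hnegsum]
    constructor <;> intro hh <;> linarith
  exact ⟨hfirst, hfirst.trans (forall_congr' hsecond)⟩

end
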